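/- arXiv:2402.02322 — 3 statements merged into one kernel-verified Lean document; each statement's English description precedes it below -/
import Mathlib

section
/- For every α ∈ ℝ^n, the vector β(α) with entries β_j(α) = 𝔅(η_j(α)) attains the infimum of L(·, α) over ℝ^p; that is, L(β(α), α) = D(α) and L(β(α), α) ≤ L(β, α) for all β ∈ ℝ^p. -/
noncomputable section

/-- ℓ₀ "norm": number of nonzero entries, as a real number. -/
def zeroNorm {p : ℕ} (β : EuclideanSpace ℝ (Fin p)) : ℝ :=
  ((Finset.univ.filter fun j => β j ≠ 0).card : ℝ)

/-- ℓ₁ norm. -/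
def oneNorm {p : ℕ} (β : EuclideanSpace ℝ (Fin p)) : ℝ := ∑ j, |β j|

/-- `X β`, where `x j` is the `j`-th column of `X`. -/
def Xmul {n p : ℕ} (x : Fin p → EuclideanSpace ℝ (Fin n))
    (β : EuclideanSpace ℝ (Fin p)) : EuclideanSpace ℝ (Fin n) :=
  ∑ j, β j • x j

/-- Primal objective `P(β)`. -/
def Pobj {n p : ℕ} (x : Fin p → EuclideanSpace ℝ (Fin n)) (y : EuclideanSpace ℝ (Fin n))
    (l0 l1 l2 : ℝ) (β : EuclideanSpace ℝ (Fin p)) : ℝ :=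
  (1/2) * ‖y - Xmul x β‖^2 + l0 * zeroNorm β + l1 * oneNorm β + l2 * ‖β‖^2

/-- Lagrangian `L(β, α)`. -/
def Lag {n p : ℕ} (x : Fin p → EuclideanSpace ℝ (Fin n)) (y : EuclideanSpace ℝ (Fin n))
    (l0 l1 l2 : ℝ) (β : EuclideanSpace ℝ (Fin p)) (α : EuclideanSpace ℝ (Fin n)) : ℝ :=
  (inner ℝ α (Xmul x β) : ℝ) - (1/2) * ‖α‖^2 - (inner ℝ y α : ℝ)
    + l0 * zeroNorm β + l1 * oneNorm β + l2 * ‖β‖^2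

/-- `η_j(α) = −⟨x_j, α⟩ / (2 λ₂)`. -/
def etav {n p : ℕ} (x : Fin p → EuclideanSpace ℝ (Fin n)) (l2 : ℝ)
    (α : EuclideanSpace ℝ (Fin n)) (j : Fin p) : ℝ :=
  -(inner ℝ (x j) α : ℝ) / (2 * l2)

/-- Threshold `η₀ = (2√(λ₀λ₂) + λ₁)/(2λ₂)`. -/
def eta0 (l0 l1 l2 : ℝ) : ℝ := (2 * Real.sqrt (l0 * l2) + l1) / (2 * l2)

/-- Scalar function `ψ` appearing in the dual objective. -/
def psi (l0 l1 l2 : ℝ) (t : ℝ) : ℝ :=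
  if eta0 l0 l1 l2 ≤ |t| then -l2 * (|t| - l1 / (2 * l2))^2 + l0 else 0

/-- Dual objective `D(α)` for the square loss. -/
def Dobj {n p : ℕ} (x : Fin p → EuclideanSpace ℝ (Fin n)) (y : EuclideanSpace ℝ (Fin n))
    (l0 l1 l2 : ℝ) (α : EuclideanSpace ℝ (Fin n)) : ℝ :=
  -(1/2) * ‖α‖^2 - (inner ℝ y α : ℝ) + ∑ j : Fin p, psi l0 l1 l2 (etav x l2 α j)

/-- Thresholding map `𝔅`. -/
def Bth (l0 l1 l2 : ℝ) (t : ℝ) : ℝ :=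
  if eta0 l0 l1 l2 ≤ |t| then Real.sign t * (|t| - l1 / (2 * l2)) else 0

/-- Primal-dual link `β(α)` with entries `β_j(α) = 𝔅(η_j(α))`. -/
def betaOf {n p : ℕ} (x : Fin p → EuclideanSpace ℝ (Fin n)) (l0 l1 l2 : ℝ)
    (α : EuclideanSpace ℝ (Fin n)) : EuclideanSpace ℝ (Fin p) :=
  WithLp.toLp 2 (fun j => Bth l0 l1 l2 (etav x l2 α j))

/-- `(β̄, ᾱ)` is a saddle point of the Lagrangian `L`. -/
def IsSaddle {n p : ℕ} (x : Fin p → EuclideanSpace ℝ (Fin n)) (y : EuclideanSpace ℝ (Fin n))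
    (l0 l1 l2 : ℝ) (βb : EuclideanSpace ℝ (Fin p)) (αb : EuclideanSpace ℝ (Fin n)) : Prop :=
  (∀ α, Lag x y l0 l1 l2 βb α ≤ Lag x y l0 l1 l2 βb αb) ∧
  (∀ β, Lag x y l0 l1 l2 βb αb ≤ Lag x y l0 l1 l2 β αb)



/-- Per-coordinate term of the Lagrangian. -/
def Gfun (l0 l1 l2 t b : ℝ) : ℝ :=
  -(2*l2*t)*b + l2*b^2 + l1*|b| + (if b = 0 then 0 else l0)

lemma G_eq (l0 l1 l2 t : ℝ) (hl0 : 0 < l0) (hl1 : 0 ≤ l1) (hl2 : 0 < l2) :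
    Gfun l0 l1 l2 t (Bth l0 l1 l2 t) = psi l0 l1 l2 t := by
  have hr0 : (0:ℝ) ≤ Real.sqrt (l0*l2) := Real.sqrt_nonneg _
  have hr : Real.sqrt (l0*l2) ^ 2 = l0*l2 := Real.sq_sqrt (by positivity)
  have hrpos : 0 < Real.sqrt (l0*l2) := Real.sqrt_pos.2 (by positivity)
  by_cases h : eta0 l0 l1 l2 ≤ |t|
  · have hA : 2 * Real.sqrt (l0*l2) + l1 ≤ 2*l2*|t| := by
      have := (div_le_iff₀ (by positivity : (0:ℝ) < 2*l2)).1 h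
      linarith [this]
    have hAc : l1/(2*l2) < |t| := by
      rw [div_lt_iff₀ (by positivity : (0:ℝ) < 2*l2)]
      nlinarith
    have ht : t ≠ 0 := by
      intro h0; rw [h0, abs_zero] at hAc
      have : 0 ≤ l1/(2*l2) := by positivity
      linarith
    have hs2 : Real.sign t ^ 2 = 1 := by
      rcases lt_or_gt_of_ne ht with h' | h'
      · rw [Real.sign_of_neg h']; ring
      · rw [Real.sign_of_pos h']; ring
    have hst : Real.sign t * t = |t| := by
      rcases lt_or_gt_of_ne ht with h' | h'
      · rw [Real.sign_of_neg h', abs_of_neg h']; ring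
      · rw [Real.sign_of_pos h', abs_of_pos h']; ring
    have habs : |Real.sign t| = 1 := by
      rcases lt_or_gt_of_ne ht with h' | h'
      · rw [Real.sign_of_neg h']; simp
      · rw [Real.sign_of_pos h']; simp
    have hb : Bth l0 l1 l2 t = Real.sign t * (|t| - l1/(2*l2)) := by
      rw [Bth, if_pos h]
    have hbabs : |Bth l0 l1 l2 t| = |t| - l1/(2*l2) := by
      rw [hb, abs_mul, habs, one_mul, abs_of_pos (by linarith)]
    have hbne : Bth l0 l1 l2 t ≠ 0 := by
      intro h0
      rw [h0, abs_zero] at hbabs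
      linarith
    rw [Gfun, if_neg hbne, psi, if_pos h, hb, abs_mul, habs, one_mul,
      abs_of_pos (by linarith : (0:ℝ) < |t| - l1/(2*l2))]
    have e1 : -(2*l2*t) * (Real.sign t * (|t| - l1/(2*l2)))
        = -(2*l2) * (Real.sign t * t) * (|t| - l1/(2*l2)) := by ring
    have e2 : (Real.sign t * (|t| - l1/(2*l2)))^2 = (|t| - l1/(2*l2))^2 := by
      rw [mul_pow, hs2, one_mul]
    rw [e1, hst, e2]
    field_simp
    ring
  · rw [psi, if_neg h, Bth, if_neg h, Gfun]
    simp

lemma G_ge (l0 l1 l2 t b : ℝ) (hl0 : 0 < l0) (hl1 : 0 ≤ l1) (hl2 : 0 < l2) :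
    psi l0 l1 l2 t ≤ Gfun l0 l1 l2 t b := by
  have hr0 : (0:ℝ) ≤ Real.sqrt (l0*l2) := Real.sqrt_nonneg _
  have hr : Real.sqrt (l0*l2) ^ 2 = l0*l2 := Real.sq_sqrt (by positivity)
  have htb : t * b ≤ |t| * |b| := by
    calc t * b ≤ |t * b| := le_abs_self _
    _ = |t| * |b| := abs_mul t b
  have hd : l1 = 2*l2*(l1/(2*l2)) := by field_simp
  by_cases hb : b = 0
  · subst hb
    have hG0 : Gfun l0 l1 l2 t 0 = 0 := by simp [Gfun]
    rw [hG0]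
    by_cases h : eta0 l0 l1 l2 ≤ |t|
    · rw [psi, if_pos h]
      have hA : 2 * Real.sqrt (l0*l2) + l1 ≤ 2*l2*|t| := by
        have := (div_le_iff₀ (by positivity : (0:ℝ) < 2*l2)).1 h
        linarith [this]
      have key : l0 ≤ l2 * (|t| - l1/(2*l2))^2 := by
        have hexp : l2 * (|t| - l1/(2*l2))^2 = (2*l2*|t| - l1)^2 / (4*l2) := by
          field_simp; ring
        rw [hexp, le_div_iff₀ (by positivity : (0:ℝ) < 4*l2)]
        nlinarith [sq_nonneg (2*l2*|t| - l1 - 2*Real.sqrt (l0*l2))]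
      linarith
    · rw [psi, if_neg h]
  · rw [Gfun, if_neg hb]
    have hB : 0 < |b| := abs_pos.2 hb
    have hmain : -(2*l2)*(|t| * |b|) + l2*|b|^2 + l1*|b| ≤ -(2*l2*t)*b + l2*b^2 + l1*|b| := by
      have : b^2 = |b|^2 := (sq_abs b).symm
      nlinarith
    by_cases h : eta0 l0 l1 l2 ≤ |t|
    · rw [psi, if_pos h]
      have key : -l2 * (|t| - l1/(2*l2))^2 + l0
          ≤ -(2*l2)*(|t| * |b|) + l2*|b|^2 + l1*|b| + l0 := by
        nlinarith [sq_nonneg (|b| - (|t| - l1/(2*l2)))]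
      linarith
    · rw [psi, if_neg h]
      push_neg at h
      have hA : 2*l2*|t| < 2 * Real.sqrt (l0*l2) + l1 := by
        rw [eta0] at h
        have h2 : |t| * (2*l2) < 2*Real.sqrt (l0*l2) + l1 :=
          (lt_div_iff₀ (by positivity : (0:ℝ) < 2*l2)).1 h
        linarith
      have key : 0 ≤ -(2*l2)*(|t| * |b|) + l2*|b|^2 + l1*|b| + l0 := by
        have h1 : 0 ≤ (2 * Real.sqrt (l0*l2) + l1 - 2*l2*|t|) * |b| :=
          mul_nonneg (by linarith) hB.le
        have h2 : 0 ≤ (l2*|b| - Real.sqrt (l0*l2))^2 := sq_nonneg _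
        nlinarith
      linarith

lemma Lag_decomp {n p : ℕ} (x : Fin p → EuclideanSpace ℝ (Fin n))
    (y : EuclideanSpace ℝ (Fin n)) (l0 l1 l2 : ℝ) (hl2 : 0 < l2)
    (β : EuclideanSpace ℝ (Fin p)) (α : EuclideanSpace ℝ (Fin n)) :
    Lag x y l0 l1 l2 β α = -(1/2) * ‖α‖^2 - (inner ℝ y α : ℝ)
      + ∑ j, Gfun l0 l1 l2 (etav x l2 α j) (β j) := by
  have h1 : (inner ℝ α (Xmul x β) : ℝ) = ∑ j, -(2*l2*(etav x l2 α j))*(β j) := by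
    rw [Xmul, inner_sum]
    refine Finset.sum_congr rfl fun j _ => ?_
    rw [real_inner_smul_right, real_inner_comm, etav]
    field_simp
  have h2 : l0 * zeroNorm β = ∑ j, (if β j = 0 then (0:ℝ) else l0) := by
    rw [zeroNorm, Finset.card_filter]
    push_cast
    rw [Finset.mul_sum]
    refine Finset.sum_congr rfl fun j _ => ?_
    by_cases hj : β j = 0 <;> simp [hj]
  have h3 : ‖β‖^2 = ∑ j, (β j)^2 := by
    rw [EuclideanSpace.norm_eq,
      Real.sq_sqrt (Finset.sum_nonneg fun j _ => sq_nonneg _)]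
    simp [Real.norm_eq_abs, sq_abs]
  rw [Lag, h1, h2, h3, oneNorm]
  simp only [Gfun, Finset.sum_add_distrib, Finset.mul_sum]
  ring

/-- `β(α)` attains the infimum of `L(·, α)`. -/
theorem stmt3 (n p : ℕ) (x : Fin p → EuclideanSpace ℝ (Fin n))
    (y : EuclideanSpace ℝ (Fin n)) (l0 l1 l2 : ℝ)
    (hl0 : 0 < l0) (hl1 : 0 ≤ l1) (hl2 : 0 < l2)
    (α : EuclideanSpace ℝ (Fin n)) :
    Lag x y l0 l1 l2 (betaOf x l0 l1 l2 α) α = Dobj x y l0 l1 l2 α ∧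
    ∀ β : EuclideanSpace ℝ (Fin p),
      Lag x y l0 l1 l2 (betaOf x l0 l1 l2 α) α ≤ Lag x y l0 l1 l2 β α := by
  have hbj : ∀ j, betaOf x l0 l1 l2 α j = Bth l0 l1 l2 (etav x l2 α j) := fun j => rfl
  constructor
  · rw [Lag_decomp x y l0 l1 l2 hl2, Dobj]
    congr 1
    refine Finset.sum_congr rfl fun j _ => ?_
    rw [hbj j]
    exact G_eq l0 l1 l2 (etav x l2 α j) hl0 hl1 hl2
  · intro β
    rw [Lag_decomp x y l0 l1 l2 hl2, Lag_decomp x y l0 l1 l2 hl2]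
    apply add_le_add_right
    refine Finset.sum_le_sum fun j _ => ?_
    rw [hbj j, G_eq l0 l1 l2 (etav x l2 α j) hl0 hl1 hl2]
    exact G_ge l0 l1 l2 (etav x l2 α j) (β j) hl0 hl1 hl2
end
end

section
/- Strong duality characterization: a pair (β̄, ᾱ) ∈ ℝ^p × ℝ^n is a saddle point of L if and only if ᾱ maximizes D over ℝ^n (i.e. D(α) ≤ D(ᾱ) for all α ∈ ℝ^n) and P(β̄) = D(ᾱ). -/
noncomputable section

-- Auxiliary lemmas

lemma scalar_le (l0 l1 l2 : ℝ) (hl0 : 0 < l0) (hl1 : 0 ≤ l1) (hl2 : 0 < l2) (η b : ℝ) :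
    psi l0 l1 l2 η ≤ -2*l2*η*b + (if b = 0 then 0 else l0) + l1*|b| + l2*b^2 := by
  have hs2 : Real.sqrt (l0*l2) ^ 2 = l0*l2 := Real.sq_sqrt (by positivity)
  have hs0 : 0 < Real.sqrt (l0*l2) := Real.sqrt_pos.2 (by positivity)
  set s := Real.sqrt (l0*l2) with hsdef
  set c := l1 / (2*l2) with hcdef
  have hc : l1 = 2*l2*c := by
    have h := (eq_div_iff (by positivity : (2:ℝ)*l2 ≠ 0)).1 hcdef; linarith
  have hc0 : 0 ≤ c := by positivity
  have ha0 : 0 ≤ |η| := abs_nonneg η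
  have ht0 : 0 ≤ |b| := abs_nonneg b
  have hab : η*b ≤ |η| * |b| := (le_abs_self _).trans (le_of_eq (abs_mul _ _))
  have htb : |b|^2 = b^2 := sq_abs b
  unfold psi eta0
  split_ifs with h1 h2 h3
  · subst h2
    have h1' : 2*s + l1 ≤ |η| * (2*l2) := (div_le_iff₀ (by positivity)).1 h1
    simp only [abs_zero, mul_zero, zero_pow, ne_eq, OfNat.ofNat_ne_zero,
      not_false_eq_true]
    nlinarith [sq_nonneg (l2*(|η| - c) - s)]
  · nlinarith [sq_nonneg (|b| - (|η| - c))]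
  · subst h3; simp
  · push_neg at h1
    have h1' : |η| * (2*l2) < 2*s + l1 := (lt_div_iff₀ (by positivity)).1 h1
    have e1 : 2*l2*(η*b) ≤ 2*l2*(|η| * |b|) :=
      mul_le_mul_of_nonneg_left hab (by positivity)
    have e2 : |b| * (|η| * (2*l2)) ≤ |b| * (2*s + l1) :=
      mul_le_mul_of_nonneg_left (le_of_lt h1') ht0
    have e3 : 0 ≤ l2*(l2*|b|^2 - 2*s*|b| + l0) := by
      nlinarith [sq_nonneg (l2*|b| - s)]
    have e4 : 0 ≤ l2*|b|^2 - 2*s*|b| + l0 := (mul_nonneg_iff_of_pos_left hl2).1 e3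
    nlinarith [e1, e2, e4, htb]

lemma scalar_eq (l0 l1 l2 : ℝ) (hl0 : 0 < l0) (hl1 : 0 ≤ l1) (hl2 : 0 < l2) (η : ℝ) :
    psi l0 l1 l2 η = -2*l2*η*(Bth l0 l1 l2 η)
      + (if Bth l0 l1 l2 η = 0 then 0 else l0) + l1*|Bth l0 l1 l2 η|
      + l2*(Bth l0 l1 l2 η)^2 := by
  have hs2 : Real.sqrt (l0*l2) ^ 2 = l0*l2 := Real.sq_sqrt (by positivity)
  have hs0 : 0 < Real.sqrt (l0*l2) := Real.sqrt_pos.2 (by positivity)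
  have hl2' : (2:ℝ)*l2 ≠ 0 := by positivity
  unfold psi Bth
  by_cases h1 : eta0 l0 l1 l2 ≤ |η|
  · rw [if_pos h1, if_pos h1]
    have h1' : 2*Real.sqrt (l0*l2) + l1 ≤ |η| * (2*l2) := by
      rw [eta0] at h1; exact (div_le_iff₀ (by positivity)).1 h1
    have hd : 0 < |η| - l1/(2*l2) := by
      have hx : l1/(2*l2) * (2*l2) = l1 := div_mul_cancel₀ _ hl2'
      nlinarith [hs0, hl2]
    have hη : η ≠ 0 := by
      intro h; rw [h, abs_zero] at hd
      have : 0 ≤ l1/(2*l2) := by positivity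
      linarith
    rcases lt_or_gt_of_ne hη with hneg | hpos
    · rw [Real.sign_of_neg hneg, abs_of_neg hneg]
      have hb : (-1 : ℝ) * (-η - l1/(2*l2)) ≠ 0 := by
        rw [abs_of_neg hneg] at hd; intro h; nlinarith
      rw [if_neg hb, abs_of_nonpos (by rw [abs_of_neg hneg] at hd; nlinarith :
        (-1 : ℝ) * (-η - l1/(2*l2)) ≤ 0)]
      field_simp; ring
    · rw [Real.sign_of_pos hpos, abs_of_pos hpos]
      have hb : (1 : ℝ) * (η - l1/(2*l2)) ≠ 0 := by
        rw [abs_of_pos hpos] at hd; intro h; nlinarith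
      rw [if_neg hb, abs_of_pos (by rw [abs_of_pos hpos] at hd; nlinarith :
        (0:ℝ) < 1 * (η - l1/(2*l2)))]
      field_simp; ring
  · rw [if_neg h1, if_neg h1, if_pos rfl]
    simp

lemma norm_sq_sum {p : ℕ} (β : EuclideanSpace ℝ (Fin p)) : ‖β‖^2 = ∑ j, (β j)^2 := by
  rw [EuclideanSpace.norm_eq, Real.sq_sqrt (by positivity)]
  exact Finset.sum_congr rfl fun j _ => by rw [Real.norm_eq_abs, sq_abs]

lemma lag_eq_sum {n p : ℕ} (x : Fin p → EuclideanSpace ℝ (Fin n))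
    (y : EuclideanSpace ℝ (Fin n)) (l0 l1 l2 : ℝ) (hl2 : 0 < l2)
    (β : EuclideanSpace ℝ (Fin p)) (α : EuclideanSpace ℝ (Fin n)) :
    Lag x y l0 l1 l2 β α = -(1/2)*‖α‖^2 - (inner ℝ y α : ℝ)
      + ∑ j, (-2*l2*(etav x l2 α j)*(β j)
          + ((if β j = 0 then 0 else l0) + l1*|β j| + l2*(β j)^2)) := by
  have h1 : (inner ℝ α (Xmul x β) : ℝ) = ∑ j, -2*l2*(etav x l2 α j)*(β j) := by
    unfold Xmul etav
    rw [inner_sum]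
    refine Finset.sum_congr rfl fun j _ => ?_
    rw [real_inner_smul_right, real_inner_comm (x j) α]
    field_simp
  have h2 : l0 * zeroNorm β = ∑ j, if β j = 0 then (0:ℝ) else l0 := by
    unfold zeroNorm
    rw [Finset.card_filter]
    push_cast
    rw [Finset.mul_sum]
    exact Finset.sum_congr rfl fun j _ => by by_cases h : β j = 0 <;> simp [h]
  have h3 : l1 * oneNorm β = ∑ j, l1 * |β j| := by unfold oneNorm; rw [Finset.mul_sum]
  have h4 : l2 * ‖β‖^2 = ∑ j, l2 * (β j)^2 := by rw [norm_sq_sum, Finset.mul_sum]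
  have hsum : ∑ j, (-2*l2*(etav x l2 α j)*(β j)
          + ((if β j = 0 then 0 else l0) + l1*|β j| + l2*(β j)^2))
      = (∑ j, -2*l2*(etav x l2 α j)*(β j)) + ((∑ j, if β j = 0 then (0:ℝ) else l0)
          + (∑ j, l1*|β j|) + (∑ j, l2*(β j)^2)) := by
    rw [Finset.sum_add_distrib, Finset.sum_add_distrib, Finset.sum_add_distrib]
  unfold Lag
  rw [hsum, ← h1, ← h2, ← h3, ← h4]
  ring

lemma D_le_lag {n p : ℕ} (x : Fin p → EuclideanSpace ℝ (Fin n))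
    (y : EuclideanSpace ℝ (Fin n)) (l0 l1 l2 : ℝ)
    (hl0 : 0 < l0) (hl1 : 0 ≤ l1) (hl2 : 0 < l2)
    (β : EuclideanSpace ℝ (Fin p)) (α : EuclideanSpace ℝ (Fin n)) :
    Dobj x y l0 l1 l2 α ≤ Lag x y l0 l1 l2 β α := by
  rw [lag_eq_sum x y l0 l1 l2 hl2 β α]
  unfold Dobj
  have hsum : ∑ j, psi l0 l1 l2 (etav x l2 α j)
      ≤ ∑ j, (-2*l2*(etav x l2 α j)*(β j)
          + ((if β j = 0 then 0 else l0) + l1*|β j| + l2*(β j)^2)) :=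
    Finset.sum_le_sum fun j _ => by
      have := scalar_le l0 l1 l2 hl0 hl1 hl2 (etav x l2 α j) (β j)
      linarith
  linarith

lemma lag_betaOf {n p : ℕ} (x : Fin p → EuclideanSpace ℝ (Fin n))
    (y : EuclideanSpace ℝ (Fin n)) (l0 l1 l2 : ℝ)
    (hl0 : 0 < l0) (hl1 : 0 ≤ l1) (hl2 : 0 < l2) (α : EuclideanSpace ℝ (Fin n)) :
    Lag x y l0 l1 l2 (betaOf x l0 l1 l2 α) α = Dobj x y l0 l1 l2 α := by
  rw [lag_eq_sum x y l0 l1 l2 hl2 _ α]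
  unfold Dobj
  have hsum : ∑ j, (-2*l2*(etav x l2 α j)*(betaOf x l0 l1 l2 α j)
          + ((if betaOf x l0 l1 l2 α j = 0 then 0 else l0)
            + l1*|betaOf x l0 l1 l2 α j| + l2*(betaOf x l0 l1 l2 α j)^2))
      = ∑ j, psi l0 l1 l2 (etav x l2 α j) :=
    Finset.sum_congr rfl fun j _ => by
      have := scalar_eq l0 l1 l2 hl0 hl1 hl2 (etav x l2 α j)
      show -2*l2*(etav x l2 α j)*(Bth l0 l1 l2 (etav x l2 α j))
          + ((if Bth l0 l1 l2 (etav x l2 α j) = 0 then 0 else l0)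
            + l1*|Bth l0 l1 l2 (etav x l2 α j)| + l2*(Bth l0 l1 l2 (etav x l2 α j))^2)
          = psi l0 l1 l2 (etav x l2 α j)
      linarith
  rw [hsum]

lemma lag_le_P {n p : ℕ} (x : Fin p → EuclideanSpace ℝ (Fin n))
    (y : EuclideanSpace ℝ (Fin n)) (l0 l1 l2 : ℝ) (β : EuclideanSpace ℝ (Fin p))
    (α : EuclideanSpace ℝ (Fin n)) :
    Lag x y l0 l1 l2 β α ≤ Pobj x y l0 l1 l2 β := by
  have h := norm_add_sq_real (y - Xmul x β) α
  have h2 : (inner ℝ (y - Xmul x β) α : ℝ) = (inner ℝ y α : ℝ) - (inner ℝ (Xmul x β) α : ℝ) :=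
    inner_sub_left _ _ _
  have h3 : (inner ℝ α (Xmul x β) : ℝ) = (inner ℝ (Xmul x β) α : ℝ) := real_inner_comm _ _
  unfold Lag Pobj
  nlinarith [sq_nonneg ‖y - Xmul x β + α‖]

lemma lag_at_opt {n p : ℕ} (x : Fin p → EuclideanSpace ℝ (Fin n))
    (y : EuclideanSpace ℝ (Fin n)) (l0 l1 l2 : ℝ) (β : EuclideanSpace ℝ (Fin p)) :
    Lag x y l0 l1 l2 β (Xmul x β - y) = Pobj x y l0 l1 l2 β := by
  have h := norm_add_sq_real (y - Xmul x β) (Xmul x β - y)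
  have h0 : y - Xmul x β + (Xmul x β - y) = 0 := by abel
  rw [h0, norm_zero] at h
  have h2 : (inner ℝ (y - Xmul x β) (Xmul x β - y) : ℝ)
      = (inner ℝ y (Xmul x β - y) : ℝ) - (inner ℝ (Xmul x β) (Xmul x β - y) : ℝ) :=
    inner_sub_left _ _ _
  have h3 : (inner ℝ (Xmul x β - y) (Xmul x β) : ℝ) = (inner ℝ (Xmul x β) (Xmul x β - y) : ℝ) :=
    real_inner_comm _ _
  unfold Lag Pobj
  nlinarith


/-- strong duality characterization of saddle points. -/
theorem stmt9 (n p : ℕ) (x : Fin p → EuclideanSpace ℝ (Fin n))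
    (y : EuclideanSpace ℝ (Fin n)) (l0 l1 l2 : ℝ)
    (hl0 : 0 < l0) (hl1 : 0 ≤ l1) (hl2 : 0 < l2)
    (βb : EuclideanSpace ℝ (Fin p)) (αb : EuclideanSpace ℝ (Fin n)) :
    IsSaddle x y l0 l1 l2 βb αb ↔
      ((∀ α : EuclideanSpace ℝ (Fin n), Dobj x y l0 l1 l2 α ≤ Dobj x y l0 l1 l2 αb) ∧
       Pobj x y l0 l1 l2 βb = Dobj x y l0 l1 l2 αb) := by
  constructor
  · rintro ⟨hα, hβ⟩
    have hPL : Pobj x y l0 l1 l2 βb = Lag x y l0 l1 l2 βb αb := by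
      refine le_antisymm ?_ (lag_le_P x y l0 l1 l2 βb αb)
      rw [← lag_at_opt x y l0 l1 l2 βb]
      exact hα _
    have hLD : Lag x y l0 l1 l2 βb αb = Dobj x y l0 l1 l2 αb := by
      refine le_antisymm ?_ (D_le_lag x y l0 l1 l2 hl0 hl1 hl2 βb αb)
      have := hβ (betaOf x l0 l1 l2 αb)
      rwa [lag_betaOf x y l0 l1 l2 hl0 hl1 hl2 αb] at this
    refine ⟨fun α => ?_, hPL.trans hLD⟩
    calc Dobj x y l0 l1 l2 α ≤ Lag x y l0 l1 l2 βb α :=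
          D_le_lag x y l0 l1 l2 hl0 hl1 hl2 βb α
      _ ≤ Lag x y l0 l1 l2 βb αb := hα α
      _ = Dobj x y l0 l1 l2 αb := hLD
  · rintro ⟨hmax, heq⟩
    have h1 : Lag x y l0 l1 l2 βb αb = Pobj x y l0 l1 l2 βb := by
      refine le_antisymm (lag_le_P x y l0 l1 l2 βb αb) ?_
      calc Pobj x y l0 l1 l2 βb = Dobj x y l0 l1 l2 αb := heq
        _ ≤ Lag x y l0 l1 l2 βb αb := D_le_lag x y l0 l1 l2 hl0 hl1 hl2 βb αb
    constructor
    · intro α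
      calc Lag x y l0 l1 l2 βb α ≤ Pobj x y l0 l1 l2 βb := lag_le_P x y l0 l1 l2 βb α
        _ = Lag x y l0 l1 l2 βb αb := h1.symm
    · intro β
      calc Lag x y l0 l1 l2 βb αb = Pobj x y l0 l1 l2 βb := h1
        _ = Dobj x y l0 l1 l2 αb := heq
        _ ≤ Lag x y l0 l1 l2 β αb := D_le_lag x y l0 l1 l2 hl0 hl1 hl2 β αb
end
end

section
/- The coordinate-descent operation T never increases the primal objective: let j be an index with ‖x_j‖ = 1, let β ∈ ℝ^p, set β̃_j = ⟨y − Xβ, x_j⟩ + β_j, and let β' be the vector obtained from β by replacing its j-th entry with T(β̃_j), where T(b) = sign(b)·(|b| − λ₁)/(1 + 2λ₂) if (|b| − λ₁)/(1 + 2λ₂) ≥ √(2λ₀/(1 + 2λ₂)) and T(b) = 0 otherwise. Then P(β') ≤ P(β). -/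
noncomputable section

lemma sum_sub_single {p : ℕ} (j : Fin p) (u v : Fin p → ℝ)
    (h : ∀ i, i ≠ j → u i = v i) :
    ∑ i, u i = (∑ i, v i) + (u j - v j) := by
  have h2 : ∑ i, (u i - v i) = u j - v j := by
    apply Finset.sum_eq_single
    · intro i _ hi; rw [h i hi]; ring
    · intro h; exact absurd (Finset.mem_univ j) h
  have h3 : ∑ i, (u i - v i) = (∑ i, u i) - ∑ i, v i := Finset.sum_sub_distrib _ _
  linarith

lemma zeroNorm_eq' {p : ℕ} (β : EuclideanSpace ℝ (Fin p)) :
    ((Finset.univ.filter fun j => β j ≠ 0).card : ℝ) = ∑ i, if β i = 0 then (0:ℝ) else 1 := by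
  rw [Finset.card_filter, Nat.cast_sum]
  refine Finset.sum_congr rfl fun i _ => ?_
  by_cases h : β i = 0 <;> simp [h]

lemma normsq_eq {p : ℕ} (β : EuclideanSpace ℝ (Fin p)) :
    ‖β‖^2 = ∑ i, (β i)^2 := by
  rw [EuclideanSpace.norm_eq, Real.sq_sqrt]
  · exact Finset.sum_congr rfl fun i _ => by rw [Real.norm_eq_abs, sq_abs]
  · exact Finset.sum_nonneg fun i _ => sq_nonneg _

lemma key_scalar (a l0 l1 b : ℝ) (ha : 0 < a) (hl0 : 0 < l0) (hl1 : 0 ≤ l1)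
    (T : ℝ)
    (hT : T = if Real.sqrt (2 * l0 / a) ≤ (|b| - l1) / a
        then Real.sign b * ((|b| - l1) / a) else 0)
    (s : ℝ) :
    a/2 * T^2 - b*T + l1*|T| + (if T = 0 then 0 else l0) ≤
      a/2 * s^2 - b*s + l1*|s| + (if s = 0 then 0 else l0) := by
  set σ := Real.sqrt (2 * l0 / a) with hσdef
  have hσpos : 0 < σ := Real.sqrt_pos.mpr (by positivity)
  have hσsq : σ^2 = 2 * l0 / a := Real.sq_sqrt (by positivity)
  have haσ : a * σ^2 = 2 * l0 := by rw [hσsq]; field_simp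
  have hbs : b * s ≤ |b| * |s| := (le_abs_self _).trans (abs_mul b s).le
  by_cases hc : σ ≤ (|b| - l1) / a
  · set w := (|b| - l1) / a with hwdef
    have hw : a * w = |b| - l1 := by rw [hwdef]; field_simp
    have hwpos : 0 < w := lt_of_lt_of_le hσpos hc
    have hb : b ≠ 0 := by
      intro h
      rw [h, abs_zero] at hw
      nlinarith
    have hTw : T = Real.sign b * w := by rw [hT, if_pos hc]
    have hfacts : |T| = w ∧ b * T = |b| * w ∧ T^2 = w^2 := by
      rcases hb.lt_or_gt with h | h
      · rw [hTw, Real.sign_of_neg h]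
        refine ⟨by rw [abs_of_nonpos (by nlinarith)]; ring,
          by rw [abs_of_neg h]; ring, by ring⟩
      · rw [hTw, Real.sign_of_pos h]
        refine ⟨by rw [abs_of_pos (by nlinarith)]; ring,
          by rw [abs_of_pos h]; ring, by ring⟩
    obtain ⟨hTabs, hbT, hT2⟩ := hfacts
    have hTne : T ≠ 0 := by
      intro h; rw [h, abs_zero] at hTabs; exact hwpos.ne hTabs
    rw [if_neg hTne, hTabs, hbT, hT2]
    have hσw : σ^2 ≤ w^2 := by nlinarith
    by_cases hs : s = 0
    · rw [if_pos hs, hs]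
      simp only [abs_zero]
      nlinarith
    · rw [if_neg hs]
      nlinarith [sq_nonneg (|s| - w), sq_abs s, abs_nonneg s]
  · have hTz : T = 0 := by rw [hT, if_neg hc]
    rw [hTz, if_pos rfl]
    simp only [abs_zero, mul_zero, zero_pow, ne_eq, OfNat.ofNat_ne_zero,
      not_false_eq_true]
    by_cases hs : s = 0
    · rw [if_pos hs, hs]; simp
    · rw [if_neg hs]
      have hlt : |b| - l1 < a * σ := by
        push_neg at hc
        calc |b| - l1 = a * ((|b| - l1)/a) := by field_simp
        _ < a * σ := by exact mul_lt_mul_of_pos_left hc ha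
      nlinarith [sq_nonneg (σ - |s|), sq_abs s, abs_nonneg s,
        mul_nonneg hl1 (abs_nonneg s), mul_nonneg ha.le (sq_nonneg (σ - |s|))]

/-- a coordinate-descent step never increases the primal objective. -/
theorem stmt17 (n p : ℕ) (x : Fin p → EuclideanSpace ℝ (Fin n))
    (y : EuclideanSpace ℝ (Fin n)) (l0 l1 l2 : ℝ)
    (hl0 : 0 < l0) (hl1 : 0 ≤ l1) (hl2 : 0 < l2)
    (j : Fin p) (hxj : ‖x j‖ = 1)
    (β : EuclideanSpace ℝ (Fin p))
    (βt : ℝ) (hβt : βt = (inner ℝ (y - Xmul x β) (x j) : ℝ) + β j)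
    (T : ℝ)
    (hT : T = if Real.sqrt (2 * l0 / (1 + 2 * l2)) ≤ (|βt| - l1) / (1 + 2 * l2)
        then Real.sign βt * ((|βt| - l1) / (1 + 2 * l2)) else 0)
    (β' : EuclideanSpace ℝ (Fin p)) (hβ' : ∀ i : Fin p, β' i = if i = j then T else β i) :
    Pobj x y l0 l1 l2 β' ≤ Pobj x y l0 l1 l2 β := by
  set a : ℝ := 1 + 2 * l2 with hadef
  have ha : (0:ℝ) < a := by positivity
  have hr : (inner ℝ (y - Xmul x β) (x j) : ℝ) = βt - β j := by rw [hβt]; ring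
  -- X β' = X β + (T - β j) • x j
  have hβ'j : β' j = T := by rw [hβ' j, if_pos rfl]
  have hX : Xmul x β' = Xmul x β + (T - β j) • x j := by
    have h1 : ∀ i : Fin p, β' i • x i = β i • x i + (β' i - β i) • x i := by
      intro i
      rw [← add_smul]
      congr 1
      ring
    have h2 : (∑ i, (β' i - β i) • x i) = (T - β j) • x j := by
      rw [Finset.sum_eq_single j
        (fun i _ hi => by rw [hβ' i, if_neg hi, sub_self, zero_smul])
        (fun h => absurd (Finset.mem_univ j) h), hβ'j]
    calc Xmul x β' = ∑ i, (β i • x i + (β' i - β i) • x i) :=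
          Finset.sum_congr rfl fun i _ => h1 i
      _ = (∑ i, β i • x i) + ∑ i, (β' i - β i) • x i := Finset.sum_add_distrib
      _ = Xmul x β + (T - β j) • x j := by rw [h2]; rfl
  have hn : ‖y - Xmul x β'‖^2
      = ‖y - Xmul x β‖^2 - 2*(T - β j)*(βt - β j) + (T - β j)^2 := by
    have hsub : y - Xmul x β' = (y - Xmul x β) - (T - β j) • x j := by
      rw [hX, sub_add_eq_sub_sub]
    rw [hsub, @norm_sub_sq_real, real_inner_smul_right, hr, norm_smul, hxj]
    simp only [Real.norm_eq_abs, mul_one, mul_pow, sq_abs]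
    ring
  have hz : zeroNorm β' = zeroNorm β
      + ((if T = 0 then (0:ℝ) else 1) - (if β j = 0 then (0:ℝ) else 1)) := by
    unfold zeroNorm
    rw [zeroNorm_eq', zeroNorm_eq']
    rw [sum_sub_single j (fun i => if β' i = 0 then (0:ℝ) else 1)
        (fun i => if β i = 0 then (0:ℝ) else 1)
        (fun i hi => by simp [hβ' i, hi]), hβ'j]
  have ho : oneNorm β' = oneNorm β + (|T| - |β j|) := by
    unfold oneNorm
    rw [sum_sub_single j (fun i => |β' i|) (fun i => |β i|)
        (fun i hi => by simp [hβ' i, hi]), hβ'j]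
  have hb2 : ‖β'‖^2 = ‖β‖^2 + (T^2 - (β j)^2) := by
    rw [normsq_eq, normsq_eq]
    rw [sum_sub_single j (fun i => (β' i)^2) (fun i => (β i)^2)
        (fun i hi => by simp [hβ' i, hi]), hβ'j]
  have hkey := key_scalar a l0 l1 βt ha hl0 hl1 T hT
  have h1 := hkey (β j)
  unfold Pobj
  rw [hn, hz, ho, hb2]
  have e1 : (if T = 0 then (0:ℝ) else l0) = l0 * (if T = 0 then (0:ℝ) else 1) := by
    by_cases h : T = 0 <;> simp [h]
  have e2 : (if β j = 0 then (0:ℝ) else l0) = l0 * (if β j = 0 then (0:ℝ) else 1) := by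
    by_cases h : β j = 0 <;> simp [h]
  rw [e1, e2] at h1
  nlinarith [h1]
end
end
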